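/- Let β_0, β_1, ..., β_m be real numbers and 0 < δ < 1 ≤ D. Then the integral ∫_0^δ r^{−1+β_0} X_1(r/D)^{1+β_1} ⋯ X_m(r/D)^{1+β_m} dr is finite if and only if either β_0 > 0, or there exists 1 ≤ j ≤ m with β_0 = β_1 = ⋯ = β_{j−1} = 0 and β_j > 0. -/

import Mathlib

open Real MeasureTheory Finset Filter Set

noncomputable def X : ℕ → ℝ → ℝ
  | 0 => id
  | (n + 1) => fun t => (1 - Real.log (X n t))⁻¹

lemma X_mem : ∀ (k : ℕ), ∀ t ∈ Set.Ioo (0:ℝ) 1, X k t ∈ Set.Ioo (0:ℝ) 1 := by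
  intro k
  induction k with
  | zero => intro t ht; exact ht
  | succ n ih =>
    intro t ht
    obtain ⟨h0, h1⟩ := ih t ht
    have hlog : Real.log (X n t) < 0 := Real.log_neg h0 h1
    have h1' : 1 < 1 - Real.log (X n t) := by linarith
    constructor
    · show (0:ℝ) < (1 - Real.log (X n t))⁻¹
      positivity
    · show (1 - Real.log (X n t))⁻¹ < 1
      rw [inv_lt_one_iff₀]; right; exact h1'

lemma X_le_succ : ∀ (k : ℕ), ∀ t ∈ Set.Ioo (0:ℝ) 1, X k t ≤ X (k+1) t := by
  intro k t ht
  obtain ⟨h0, h1⟩ := X_mem k t ht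
  have hlog := Real.log_le_sub_one_of_pos (x := (X k t)⁻¹) (by positivity)
  rw [Real.log_inv] at hlog
  have h2 : 1 - Real.log (X k t) ≤ (X k t)⁻¹ := by linarith
  have h3 : (0:ℝ) < 1 - Real.log (X k t) := by
    have := Real.log_neg h0 h1; linarith
  show X k t ≤ (1 - Real.log (X k t))⁻¹
  rw [le_inv_comm₀ h0 h3]
  · exact h2

lemma X_mono {k k' : ℕ} (h : k ≤ k') {t : ℝ} (ht : t ∈ Set.Ioo (0:ℝ) 1) :
    X k t ≤ X k' t := by
  induction k' with
  | zero => simp_all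
  | succ n ih =>
    rcases Nat.lt_or_ge k (n+1) with h' | h'
    · exact (ih (Nat.lt_succ_iff.mp h')).trans (X_le_succ n t ht)
    · have : k = n + 1 := le_antisymm h h'
      subst this; rfl

lemma one_sub_log_le {ε : ℝ} (hε : 0 < ε) {s : ℝ} (hs : 0 < s) (hs1 : s ≤ 1) :
    1 - Real.log s ≤ (1 + 1/ε) * s ^ (-ε) := by
  have h1 := Real.log_le_sub_one_of_pos (x := s ^ (-ε)) (by positivity)
  rw [Real.log_rpow hs] at h1
  have h2 : (1:ℝ) ≤ s ^ (-ε) := Real.one_le_rpow_of_pos_of_le_one_of_nonpos hs hs1 (by linarith)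
  have h3 : -Real.log s ≤ (s ^ (-ε) - 1)/ε := by
    rw [le_div_iff₀ hε]; nlinarith
  have h4 : (s ^ (-ε) - 1)/ε = s ^ (-ε)/ε - 1/ε := by ring
  have h5 : 0 < s ^ (-ε) := by positivity
  rw [h4] at h3
  have h6 : 0 < 1/ε := by positivity
  have h7 : s ^ (-ε)/ε = (1/ε) * s ^ (-ε) := by ring
  rw [h7] at h3
  nlinarith [h3, h2, h6]

lemma X_tendsto : ∀ (k : ℕ), Tendsto (X k) (nhdsWithin 0 (Set.Ioi (0:ℝ))) (nhdsWithin 0 (Set.Ioi (0:ℝ))) := by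
  have key : Tendsto (fun s : ℝ => (1 - Real.log s)⁻¹) (nhdsWithin 0 (Set.Ioi (0:ℝ)))
      (nhdsWithin 0 (Set.Ioi (0:ℝ))) := by
    rw [tendsto_nhdsWithin_iff]
    constructor
    · have h1 : Tendsto (fun s : ℝ => 1 - Real.log s) (nhdsWithin 0 (Set.Ioi (0:ℝ))) atTop := by
        apply tendsto_atTop_add_const_left
        exact tendsto_neg_atBot_atTop.comp Real.tendsto_log_nhdsGT_zero
      exact h1.inv_tendsto_atTop
    · filter_upwards [Ioo_mem_nhdsGT_of_mem (by norm_num : (0:ℝ) ∈ Set.Ico 0 1)] with s hs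
      have := X_mem 1 s hs
      simpa [X] using this.1
  intro k
  induction k with
  | zero => exact tendsto_id
  | succ n ih => exact key.comp ih

lemma X_hasDerivAt : ∀ (k : ℕ), 1 ≤ k → ∀ t ∈ Set.Ioo (0:ℝ) 1,
    HasDerivAt (X k) ((∏ l ∈ Finset.Icc 1 k, X l t) * X k t / t) t := by
  intro k
  induction k with
  | zero => omega
  | succ n ih =>
    intro _ t ht
    obtain ⟨ht0, ht1⟩ := ht
    rcases Nat.eq_zero_or_pos n with rfl | hn
    · -- base case k = 1
      have hlog : HasDerivAt Real.log t⁻¹ t := Real.hasDerivAt_log (ne_of_gt ht0)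
      have h1 : HasDerivAt (fun t => 1 - Real.log t) (-t⁻¹) t := by
        exact ((hasDerivAt_const t (1:ℝ)).sub hlog).congr_deriv (by simp)
      have hne : 1 - Real.log t ≠ 0 := by
        have := Real.log_neg ht0 ht1; intro h; linarith [h]
      have h2 := h1.inv hne
      have hX1 : X 1 t = (1 - Real.log t)⁻¹ := by simp [X]
      have hXfun : X 1 = fun s => (1 - Real.log s)⁻¹ := by
        funext s; simp [X]
      rw [hXfun]
      refine h2.congr_deriv (Eq.symm ?_)
      rw [Finset.Icc_self, Finset.prod_singleton, hX1]
      have h3 : (0:ℝ) < 1 - Real.log t := by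
        have := Real.log_neg ht0 ht1; linarith
      field_simp
    · -- inductive step
      have hd := ih hn t ⟨ht0, ht1⟩
      obtain ⟨hX0, hX1⟩ := X_mem n t ⟨ht0, ht1⟩
      have hlog : HasDerivAt (fun t => Real.log (X n t))
          (((∏ l ∈ Finset.Icc 1 n, X l t) * X n t / t) / X n t) t :=
        (Real.hasDerivAt_log (ne_of_gt hX0)).comp t hd |>.congr_deriv (by ring)
      have h1 : HasDerivAt (fun t => 1 - Real.log (X n t))
          (-(((∏ l ∈ Finset.Icc 1 n, X l t) * X n t / t) / X n t)) t := by
        exact ((hasDerivAt_const t (1:ℝ)).sub hlog).congr_deriv (by simp)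
      have hpos : (0:ℝ) < 1 - Real.log (X n t) := by
        have := Real.log_neg hX0 hX1; linarith
      have hne : 1 - Real.log (X n t) ≠ 0 := ne_of_gt hpos
      have h2 := h1.inv hne
      have hXfun : X (n+1) = fun s => (1 - Real.log (X n s))⁻¹ := by
        funext s; simp [X]
      rw [hXfun]
      refine h2.congr_deriv (Eq.symm ?_)
      rw [Finset.prod_Icc_succ_top (by omega : 1 ≤ n + 1)]
      have hXt : X (n+1) t = (1 - Real.log (X n t))⁻¹ := by simp [X]
      rw [hXt]
      field_simp

lemma X_comp_hasDerivAt {D : ℝ} (hD : 1 ≤ D) (j : ℕ) (hj : 1 ≤ j) {r : ℝ}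
    (hr : r ∈ Set.Ioo (0:ℝ) D) :
    HasDerivAt (fun r => X j (r / D)) ((∏ l ∈ Finset.Icc 1 j, X l (r/D)) * X j (r/D) / r) r := by
  have hD0 : (0:ℝ) < D := by linarith
  have hu : r / D ∈ Set.Ioo (0:ℝ) 1 := by
    constructor
    · exact div_pos hr.1 hD0
    · rw [div_lt_one hD0]; exact hr.2
  have h1 : HasDerivAt (fun r : ℝ => r / D) (1 / D) r := by
    simpa using (hasDerivAt_id r).div_const D
  have h2 := (X_hasDerivAt j hj (r / D) hu).comp r h1
  have hD' : D ≠ 0 := ne_of_gt hD0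
  have hrne : r ≠ 0 := ne_of_gt hr.1
  refine h2.congr_deriv (Eq.symm ?_)
  field_simp


lemma X_rpow_hasDerivAt {D : ℝ} (hD : 1 ≤ D) (j : ℕ) (hj : 1 ≤ j) (γ : ℝ) {r : ℝ}
    (hr : r ∈ Set.Ioo (0:ℝ) D) :
    HasDerivAt (fun r => X j (r / D) ^ γ)
      (γ * ((∏ l ∈ Finset.Icc 1 j, X l (r/D)) * X j (r/D) ^ γ) / r) r := by
  have hD0 : (0:ℝ) < D := by linarith
  have hu : r / D ∈ Set.Ioo (0:ℝ) 1 := by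
    constructor
    · exact div_pos hr.1 hD0
    · rw [div_lt_one hD0]; exact hr.2
  have hX := X_mem j (r/D) hu
  have h1 := (X_comp_hasDerivAt hD j hj hr).rpow_const (p := γ) (Or.inl (ne_of_gt hX.1))
  have hXne : X j (r/D) ≠ 0 := ne_of_gt hX.1
  have hrne : r ≠ 0 := ne_of_gt hr.1
  convert h1 using 1
  rw [Real.rpow_sub_one hXne]
  field_simp

lemma X_log_hasDerivAt {D : ℝ} (hD : 1 ≤ D) (j : ℕ) (hj : 1 ≤ j) {r : ℝ}
    (hr : r ∈ Set.Ioo (0:ℝ) D) :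
    HasDerivAt (fun r => Real.log (X j (r / D)))
      ((∏ l ∈ Finset.Icc 1 j, X l (r/D)) / r) r := by
  have hD0 : (0:ℝ) < D := by linarith
  have hu : r / D ∈ Set.Ioo (0:ℝ) 1 := by
    constructor
    · exact div_pos hr.1 hD0
    · rw [div_lt_one hD0]; exact hr.2
  have hX := X_mem j (r/D) hu
  have h1 := (X_comp_hasDerivAt hD j hj hr).log (ne_of_gt hX.1)
  have hXne : X j (r/D) ≠ 0 := ne_of_gt hX.1
  have hrne : r ≠ 0 := ne_of_gt hr.1
  convert h1 using 1
  field_simp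


lemma X_succ_inv_le {ε : ℝ} (hε : 0 < ε) (j : ℕ) {t : ℝ} (ht : t ∈ Set.Ioo (0:ℝ) 1) :
    (X (j+1) t)⁻¹ ≤ (1 + 1/ε) * X j t ^ (-ε) := by
  have hX := X_mem j t ht
  have : X (j+1) t = (1 - Real.log (X j t))⁻¹ := by simp [X]
  rw [this, inv_inv]
  exact one_sub_log_le hε hX.1 hX.2.le

lemma tail_upper {β : ℕ → ℝ} {ε : ℝ} (hε : 0 < ε) (j m : ℕ) {t : ℝ}
    (ht : t ∈ Set.Ioo (0:ℝ) 1) :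
    ∏ l ∈ Finset.Ioc j m, X l t ^ (1 + β l) ≤
      (1 + 1/ε) ^ (∑ l ∈ Finset.Ioc j m, max 0 (-(1 + β l))) *
        X j t ^ (-(ε * ∑ l ∈ Finset.Ioc j m, max 0 (-(1 + β l)))) := by
  set A := ∑ l ∈ Finset.Ioc j m, max 0 (-(1 + β l)) with hA
  have hA0 : 0 ≤ A := Finset.sum_nonneg fun l _ => le_max_left 0 _
  have hXj := X_mem j t ht
  have hXj1 := X_mem (j+1) t ht
  have step1 : ∏ l ∈ Finset.Ioc j m, X l t ^ (1 + β l) ≤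
      ∏ l ∈ Finset.Ioc j m, X (j+1) t ^ (-(max 0 (-(1 + β l)))) := by
    apply Finset.prod_le_prod
    · intro l _; exact (Real.rpow_pos_of_pos (X_mem l t ht).1 _).le
    · intro l hl
      have hjl : j + 1 ≤ l := (Finset.mem_Ioc.mp hl).1
      rcases le_or_gt 0 (1 + β l) with h | h
      · rw [max_eq_left (by linarith), neg_zero, Real.rpow_zero]
        exact Real.rpow_le_one (X_mem l t ht).1.le (X_mem l t ht).2.le h
      · rw [max_eq_right (by linarith), neg_neg]
        exact Real.rpow_le_rpow_of_nonpos hXj1.1 (X_mono hjl ht) h.le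
  have step2 : ∏ l ∈ Finset.Ioc j m, X (j+1) t ^ (-(max 0 (-(1 + β l)))) =
      (X (j+1) t)⁻¹ ^ A := by
    rw [← Real.rpow_sum_of_pos hXj1.1, Finset.sum_neg_distrib, Real.rpow_neg hXj1.1.le,
      ← Real.inv_rpow hXj1.1.le]
  have step3 : (X (j+1) t)⁻¹ ^ A ≤ ((1 + 1/ε) * X j t ^ (-ε)) ^ A :=
    Real.rpow_le_rpow (inv_nonneg.mpr hXj1.1.le) (X_succ_inv_le hε j ht) hA0
  have step4 : ((1 + 1/ε) * X j t ^ (-ε)) ^ A = (1 + 1/ε) ^ A * X j t ^ (-(ε * A)) := by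
    rw [Real.mul_rpow (by positivity) (Real.rpow_nonneg hXj.1.le _), ← Real.rpow_mul hXj.1.le]
    congr 1
    ring
  calc ∏ l ∈ Finset.Ioc j m, X l t ^ (1 + β l) ≤ _ := step1
    _ = _ := step2
    _ ≤ _ := step3
    _ = _ := step4

lemma tail_lower {β : ℕ → ℝ} {ε : ℝ} (hε : 0 < ε) (j m : ℕ) {t : ℝ}
    (ht : t ∈ Set.Ioo (0:ℝ) 1) :
    (1 + 1/ε) ^ (-(∑ l ∈ Finset.Ioc j m, max 0 (1 + β l))) *
        X j t ^ (ε * ∑ l ∈ Finset.Ioc j m, max 0 (1 + β l)) ≤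
      ∏ l ∈ Finset.Ioc j m, X l t ^ (1 + β l) := by
  set B := ∑ l ∈ Finset.Ioc j m, max 0 (1 + β l) with hB
  have hB0 : 0 ≤ B := Finset.sum_nonneg fun l _ => le_max_left 0 _
  have hXj := X_mem j t ht
  have hXj1 := X_mem (j+1) t ht
  have step1 : ∏ l ∈ Finset.Ioc j m, X (j+1) t ^ (max 0 (1 + β l)) ≤
      ∏ l ∈ Finset.Ioc j m, X l t ^ (1 + β l) := by
    apply Finset.prod_le_prod
    · intro l _; exact (Real.rpow_pos_of_pos hXj1.1 _).le
    · intro l hl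
      have hjl : j + 1 ≤ l := (Finset.mem_Ioc.mp hl).1
      rcases le_or_gt 0 (1 + β l) with h | h
      · rw [max_eq_right h]
        exact Real.rpow_le_rpow hXj1.1.le (X_mono hjl ht) h
      · rw [max_eq_left h.le, Real.rpow_zero]
        exact Real.one_le_rpow_of_pos_of_le_one_of_nonpos (X_mem l t ht).1 (X_mem l t ht).2.le h.le
  have step2 : ∏ l ∈ Finset.Ioc j m, X (j+1) t ^ (max 0 (1 + β l)) =
      (X (j+1) t)⁻¹ ^ (-B) := by
    rw [← Real.rpow_sum_of_pos hXj1.1, Real.rpow_neg (inv_nonneg.mpr hXj1.1.le),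
      Real.inv_rpow hXj1.1.le, inv_inv]
  have step3 : ((1 + 1/ε) * X j t ^ (-ε)) ^ (-B) ≤ (X (j+1) t)⁻¹ ^ (-B) :=
    Real.rpow_le_rpow_of_nonpos (inv_pos.mpr hXj1.1) (X_succ_inv_le hε j ht) (by linarith)
  have step4 : ((1 + 1/ε) * X j t ^ (-ε)) ^ (-B) = (1 + 1/ε) ^ (-B) * X j t ^ (ε * B) := by
    rw [Real.mul_rpow (by positivity) (Real.rpow_nonneg hXj.1.le _), ← Real.rpow_mul hXj.1.le]
    congr 1
    ring
  calc (1 + 1/ε) ^ (-B) * X j t ^ (ε * B) = _ := step4.symm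
    _ ≤ _ := step3
    _ = _ := step2.symm
    _ ≤ _ := step1

lemma divergence_aux {f h h' : ℝ → ℝ} {δ δ0 : ℝ} (hδ0 : δ0 ∈ Set.Ioo 0 δ)
    (hderiv : ∀ x ∈ Set.Ioo (0:ℝ) δ, HasDerivAt h (h' x) x)
    (hcont : ContinuousOn h' (Set.Ioo 0 δ))
    (hle : ∀ x ∈ Set.Ioo (0:ℝ) δ, 0 ≤ h' x ∧ h' x ≤ f x)
    (htends : Tendsto h (nhdsWithin 0 (Set.Ioi 0)) atBot)
    (hint : IntegrableOn f (Set.Ioo 0 δ)) : False := by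
  set M := ∫ x in Set.Ioo (0:ℝ) δ, f x with hM
  have key : ∀ c ∈ Set.Ioo (0:ℝ) δ0, h δ0 - M ≤ h c := by
    intro c hc
    have hsub : Set.Icc c δ0 ⊆ Set.Ioo 0 δ := fun x hx =>
      ⟨lt_of_lt_of_le hc.1 hx.1, lt_of_le_of_lt hx.2 hδ0.2⟩
    have hsub' : Set.Ioc c δ0 ⊆ Set.Ioo 0 δ := Set.Ioc_subset_Icc_self.trans hsub
    have hci : IntegrableOn h' (Set.Ioc c δ0) :=
      ((hcont.mono hsub).integrableOn_compact isCompact_Icc).mono_set Set.Ioc_subset_Icc_self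
    have hfi : IntegrableOn f (Set.Ioc c δ0) := hint.mono_set hsub'
    have hftc : ∫ y in c..δ0, h' y = h δ0 - h c := by
      apply intervalIntegral.integral_eq_sub_of_hasDerivAt
      · intro x hx
        rw [Set.uIcc_of_le hc.2.le] at hx
        exact hderiv x (hsub hx)
      · rw [intervalIntegrable_iff_integrableOn_Ioc_of_le hc.2.le]
        exact hci
    have h1 : ∫ y in c..δ0, h' y = ∫ y in Set.Ioc c δ0, h' y :=
      intervalIntegral.integral_of_le hc.2.le
    have h2 : ∫ y in Set.Ioc c δ0, h' y ≤ ∫ y in Set.Ioc c δ0, f y := by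
      apply setIntegral_mono_on hci hfi measurableSet_Ioc
      intro x hx
      exact (hle x (hsub' hx)).2
    have h3 : ∫ y in Set.Ioc c δ0, f y ≤ M := by
      apply setIntegral_mono_set hint
      · rw [Filter.EventuallyLE, ae_restrict_iff' measurableSet_Ioo]
        exact Filter.Eventually.of_forall fun x hx => ((hle x hx).1).trans (hle x hx).2
      · exact Filter.Eventually.of_forall fun x hx => hsub' hx
    linarith [hftc, h1 ▸ hftc]
  have hev : ∀ᶠ c in nhdsWithin 0 (Set.Ioi (0:ℝ)), h c < h δ0 - M - 1 :=
    htends.eventually (Filter.eventually_lt_atBot _)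
  have hev2 : ∀ᶠ c in nhdsWithin 0 (Set.Ioi (0:ℝ)), c ∈ Set.Ioo (0:ℝ) δ0 :=
    Ioo_mem_nhdsGT_of_mem ⟨le_refl 0, hδ0.1⟩
  obtain ⟨c, hc1, hc2⟩ := (hev.and hev2).exists
  linarith [key c hc2]

lemma convergence_aux {f h h' : ℝ → ℝ} {δ δ' : ℝ} (hδ : 0 < δ) (hδ' : δ < δ')
    (hfm : MeasureTheory.AEStronglyMeasurable f (volume.restrict (Set.Ioo 0 δ)))
    (hderiv : ∀ x ∈ Set.Ioo (0:ℝ) δ', HasDerivAt h (h' x) x)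
    (h0 : Tendsto h (nhdsWithin 0 (Set.Ioi 0)) (nhds 0))
    (hle : ∀ x ∈ Set.Ioo (0:ℝ) δ, 0 ≤ f x ∧ f x ≤ h' x) :
    MeasureTheory.IntegrableOn f (Set.Ioo 0 δ) := by
  set g : ℝ → ℝ := fun x => if x ≤ 0 then 0 else h x with hg
  have hgx : ∀ x : ℝ, 0 < x → g x = h x := fun x hx => by simp [hg, not_le.mpr hx]
  have hgderiv : ∀ x ∈ Set.Ioo (0:ℝ) δ, HasDerivAt g (h' x) x := by
    intro x hx
    have hx' : x ∈ Set.Ioo (0:ℝ) δ' := ⟨hx.1, hx.2.trans hδ'⟩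
    apply (hderiv x hx').congr_of_eventuallyEq
    filter_upwards [Ioi_mem_nhds hx.1] with y hy
    exact hgx y hy
  have hgcont : ContinuousOn g (Set.Icc 0 δ) := by
    intro x hx
    rcases eq_or_lt_of_le hx.1 with rfl | hxpos
    · -- x = 0
      have h1 : Set.Icc (0:ℝ) δ ⊆ insert 0 (Set.Ioi 0) := by
        intro y hy
        rcases eq_or_lt_of_le hy.1 with rfl | hy'
        · exact Set.mem_insert _ _
        · exact Set.mem_insert_of_mem _ hy'
      have h2 : nhdsWithin (0:ℝ) (Set.Icc 0 δ) ≤ nhdsWithin 0 (insert 0 (Set.Ioi 0)) :=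
        nhdsWithin_mono _ h1
      rw [ContinuousWithinAt]
      have hg0 : g 0 = 0 := by simp [hg]
      rw [hg0]
      apply Filter.Tendsto.mono_left ?_ h2
      rw [nhdsWithin_insert]
      apply Filter.Tendsto.sup
      · have := tendsto_pure_nhds g 0
        rwa [hg0] at this
      · apply h0.congr'
        filter_upwards [self_mem_nhdsWithin] with y hy
        exact (hgx y hy).symm
    · exact (((hderiv x ⟨hxpos, lt_of_le_of_lt hx.2 hδ'⟩).continuousAt).congr
        (by filter_upwards [Ioi_mem_nhds hxpos] with y hy using (hgx y hy).symm)).continuousWithinAt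
  have hint : MeasureTheory.IntegrableOn h' (Set.Ioc 0 δ) := by
    apply intervalIntegral.integrableOn_deriv_of_nonneg hgcont hgderiv
    intro x hx
    exact (hle x hx).1.trans (hle x hx).2
  apply MeasureTheory.Integrable.mono' (hint.mono_set Set.Ioo_subset_Ioc_self) hfm
  rw [ae_restrict_iff' measurableSet_Ioo]
  apply Filter.Eventually.of_forall
  intro x hx
  rw [Real.norm_of_nonneg (hle x hx).1]
  exact (hle x hx).2

lemma X_comp_continuousAt {D : ℝ} (hD : 1 ≤ D) (j : ℕ) (hj : 1 ≤ j) {r : ℝ}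
    (hr : r ∈ Set.Ioo (0:ℝ) D) : ContinuousAt (fun r => X j (r / D)) r :=
  (X_comp_hasDerivAt hD j hj hr).continuousAt

lemma F_contOn {D : ℝ} (hD : 1 ≤ D) (β : ℕ → ℝ) (b0 : ℝ) (m : ℕ) :
    ContinuousOn (fun r => r ^ b0 * ∏ j ∈ Finset.Icc 1 m, X j (r / D) ^ (1 + β j))
      (Set.Ioo 0 D) := by
  intro r hr
  have hD0 : (0:ℝ) < D := lt_of_lt_of_le one_pos hD
  have hu : r / D ∈ Set.Ioo (0:ℝ) 1 :=
    ⟨div_pos hr.1 hD0, (div_lt_one hD0).mpr hr.2⟩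
  apply ContinuousAt.continuousWithinAt
  apply ContinuousAt.mul
  · exact Real.continuousAt_rpow_const r b0 (Or.inl (ne_of_gt hr.1))
  · apply tendsto_finset_prod
    intro j hj
    have hj1 : 1 ≤ j := (Finset.mem_Icc.mp hj).1
    have h1 := X_comp_continuousAt hD j hj1 hr
    have hne : X j (r / D) ≠ 0 := ne_of_gt (X_mem j _ hu).1
    exact h1.rpow_const (Or.inl hne)

lemma X_comp_tendsto {D : ℝ} (hD : 1 ≤ D) (j : ℕ) :
    Tendsto (fun r => X j (r / D)) (nhdsWithin 0 (Set.Ioi (0:ℝ)))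
      (nhdsWithin 0 (Set.Ioi (0:ℝ))) := by
  have hD0 : (0:ℝ) < D := lt_of_lt_of_le one_pos hD
  apply (X_tendsto j).comp
  rw [tendsto_nhdsWithin_iff]
  constructor
  · have := (continuous_id.div_const D).tendsto (0:ℝ)
    simpa using this.mono_left nhdsWithin_le_nhds
  · filter_upwards [self_mem_nhdsWithin] with r hr
    exact div_pos hr hD0

lemma prod_split {β : ℕ → ℝ} {m i : ℕ} (him : i + 1 ≤ m) (hzero : ∀ l < i + 1, β l = 0)
    (t : ℝ) :
    ∏ l ∈ Finset.Icc 1 m, X l t ^ (1 + β l) =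
      (∏ l ∈ Finset.Ioc 0 i, X l t) * X (i+1) t ^ (1 + β (i+1)) *
        ∏ l ∈ Finset.Ioc (i+1) m, X l t ^ (1 + β l) := by
  have heq : Finset.Icc 1 m = Finset.Ioc 0 m := Finset.Icc_add_one_left_eq_Ioc 0 m
  rw [heq, ← Finset.prod_Ioc_consecutive _ (Nat.zero_le (i+1)) him]
  rw [Finset.prod_Ioc_succ_top (Nat.zero_le i)]
  congr 1
  congr 1
  apply Finset.prod_congr rfl
  intro l hl
  have : β l = 0 := hzero l (Nat.lt_succ_of_le (Finset.mem_Ioc.mp hl).2)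
  rw [this, add_zero, Real.rpow_one]

lemma P_split (i : ℕ) (t : ℝ) :
    ∏ l ∈ Finset.Icc 1 (i+1), X l t =
      (∏ l ∈ Finset.Ioc 0 i, X l t) * X (i+1) t := by
  have heq : Finset.Icc 1 (i+1) = Finset.Ioc 0 (i+1) := Finset.Icc_add_one_left_eq_Ioc 0 (i+1)
  rw [heq, Finset.prod_Ioc_succ_top (Nat.zero_le i)]

lemma eps_bound {γ A : ℝ} (hγ : 0 < γ) (hA0 : 0 ≤ A) : (γ/(A+1)) * A ≤ γ := by
  have h1 : (γ/(A+1)) * A = γ * (A/(A+1)) := by ring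
  have h2 : A/(A+1) ≤ 1 := by
    apply div_le_one_of_le₀ <;> linarith
  nlinarith

lemma key_upper {β : ℕ → ℝ} {m i : ℕ} (him : i + 1 ≤ m) (hzero : ∀ l < i + 1, β l = 0)
    (hβ : 0 < β (i+1)) :
    ∃ C : ℝ, 0 < C ∧ ∀ t ∈ Set.Ioo (0:ℝ) 1,
      ∏ l ∈ Finset.Icc 1 m, X l t ^ (1 + β l) ≤
        C * ((∏ l ∈ Finset.Ioc 0 i, X l t) * X (i+1) t ^ (1 + β (i+1)/2)) := by
  set γ := β (i+1)/2 with hγdef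
  have hγ : 0 < γ := by simp only [hγdef]; linarith
  set A := ∑ l ∈ Finset.Ioc (i+1) m, max 0 (-(1 + β l)) with hA
  have hA0 : 0 ≤ A := Finset.sum_nonneg fun l _ => le_max_left 0 _
  set ε := γ/(A+1) with hεdef
  have hε : 0 < ε := by positivity
  have hεA : ε * A ≤ γ := eps_bound hγ hA0
  refine ⟨(1 + 1/ε) ^ A, by positivity, ?_⟩
  intro t ht
  have hXmem := X_mem (i+1) t ht
  have hPpos : 0 < ∏ l ∈ Finset.Ioc 0 i, X l t :=
    Finset.prod_pos fun l _ => (X_mem l t ht).1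
  rw [prod_split him hzero]
  have t1 := tail_upper (β := β) hε (i+1) m ht
  have step1 : (∏ l ∈ Finset.Ioc 0 i, X l t) * X (i+1) t ^ (1 + β (i+1)) *
      ∏ l ∈ Finset.Ioc (i+1) m, X l t ^ (1 + β l) ≤
      (∏ l ∈ Finset.Ioc 0 i, X l t) * X (i+1) t ^ (1 + β (i+1)) *
      ((1 + 1/ε) ^ A * X (i+1) t ^ (-(ε * A))) := by
    apply mul_le_mul_of_nonneg_left t1
    exact mul_nonneg hPpos.le (Real.rpow_nonneg hXmem.1.le _)
  have hcomb : X (i+1) t ^ (1 + β (i+1)) * X (i+1) t ^ (-(ε * A)) =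
      X (i+1) t ^ (1 + β (i+1) + -(ε * A)) := (Real.rpow_add hXmem.1 _ _).symm
  have hexp : X (i+1) t ^ (1 + β (i+1) + -(ε * A)) ≤ X (i+1) t ^ (1 + β (i+1)/2) := by
    apply Real.rpow_le_rpow_of_exponent_ge hXmem.1 hXmem.2.le
    simp only [hγdef] at hεA
    linarith
  calc (∏ l ∈ Finset.Ioc 0 i, X l t) * X (i+1) t ^ (1 + β (i+1)) *
        ∏ l ∈ Finset.Ioc (i+1) m, X l t ^ (1 + β l)
      ≤ (∏ l ∈ Finset.Ioc 0 i, X l t) * X (i+1) t ^ (1 + β (i+1)) *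
        ((1 + 1/ε) ^ A * X (i+1) t ^ (-(ε * A))) := step1
    _ = (1 + 1/ε) ^ A * ((∏ l ∈ Finset.Ioc 0 i, X l t) *
        (X (i+1) t ^ (1 + β (i+1)) * X (i+1) t ^ (-(ε * A)))) := by ring
    _ = (1 + 1/ε) ^ A * ((∏ l ∈ Finset.Ioc 0 i, X l t) *
        X (i+1) t ^ (1 + β (i+1) + -(ε * A))) := by rw [hcomb]
    _ ≤ (1 + 1/ε) ^ A * ((∏ l ∈ Finset.Ioc 0 i, X l t) *
        X (i+1) t ^ (1 + β (i+1)/2)) := by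
        apply mul_le_mul_of_nonneg_left _ (by positivity)
        exact mul_le_mul_of_nonneg_left hexp hPpos.le

lemma key_lower {β : ℕ → ℝ} {m i : ℕ} (him : i + 1 ≤ m) (hzero : ∀ l < i + 1, β l = 0)
    (hβ : β (i+1) < 0) :
    ∃ c : ℝ, 0 < c ∧ ∀ t ∈ Set.Ioo (0:ℝ) 1,
      c * ((∏ l ∈ Finset.Ioc 0 i, X l t) * X (i+1) t ^ (1 + β (i+1)/2)) ≤
        ∏ l ∈ Finset.Icc 1 m, X l t ^ (1 + β l) := by
  set γ := β (i+1)/2 with hγdef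
  have hγ : γ < 0 := by simp only [hγdef]; linarith
  set B := ∑ l ∈ Finset.Ioc (i+1) m, max 0 (1 + β l) with hB
  have hB0 : 0 ≤ B := Finset.sum_nonneg fun l _ => le_max_left 0 _
  set ε := (-γ)/(B+1) with hεdef
  have hε : 0 < ε := by
    apply div_pos (by linarith) (by linarith)
  have hεB : ε * B ≤ -γ := eps_bound (by linarith) hB0
  refine ⟨(1 + 1/ε) ^ (-B), by positivity, ?_⟩
  intro t ht
  have hXmem := X_mem (i+1) t ht
  have hPpos : 0 < ∏ l ∈ Finset.Ioc 0 i, X l t :=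
    Finset.prod_pos fun l _ => (X_mem l t ht).1
  rw [prod_split him hzero]
  have t1 := tail_lower (β := β) hε (i+1) m ht
  have step1 : (∏ l ∈ Finset.Ioc 0 i, X l t) * X (i+1) t ^ (1 + β (i+1)) *
      ((1 + 1/ε) ^ (-B) * X (i+1) t ^ (ε * B)) ≤
      (∏ l ∈ Finset.Ioc 0 i, X l t) * X (i+1) t ^ (1 + β (i+1)) *
      ∏ l ∈ Finset.Ioc (i+1) m, X l t ^ (1 + β l) := by
    apply mul_le_mul_of_nonneg_left t1
    exact mul_nonneg hPpos.le (Real.rpow_nonneg hXmem.1.le _)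
  have hcomb : X (i+1) t ^ (1 + β (i+1)) * X (i+1) t ^ (ε * B) =
      X (i+1) t ^ (1 + β (i+1) + ε * B) := (Real.rpow_add hXmem.1 _ _).symm
  have hexp : X (i+1) t ^ (1 + β (i+1)/2) ≤ X (i+1) t ^ (1 + β (i+1) + ε * B) := by
    apply Real.rpow_le_rpow_of_exponent_ge hXmem.1 hXmem.2.le
    simp only [hγdef] at hεB
    linarith
  calc (1 + 1/ε) ^ (-B) * ((∏ l ∈ Finset.Ioc 0 i, X l t) * X (i+1) t ^ (1 + β (i+1)/2))
      ≤ (1 + 1/ε) ^ (-B) * ((∏ l ∈ Finset.Ioc 0 i, X l t) *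
        X (i+1) t ^ (1 + β (i+1) + ε * B)) := by
        apply mul_le_mul_of_nonneg_left _ (by positivity)
        exact mul_le_mul_of_nonneg_left hexp hPpos.le
    _ = (∏ l ∈ Finset.Ioc 0 i, X l t) * X (i+1) t ^ (1 + β (i+1)) *
        ((1 + 1/ε) ^ (-B) * X (i+1) t ^ (ε * B)) := by rw [← hcomb]; ring
    _ ≤ _ := step1

lemma glob_upper {β : ℕ → ℝ} {m : ℕ} (hβ : 0 < β 0) :
    ∃ C : ℝ, 0 < C ∧ ∀ t ∈ Set.Ioo (0:ℝ) 1,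
      ∏ l ∈ Finset.Icc 1 m, X l t ^ (1 + β l) ≤ C * t ^ (-(β 0/2)) := by
  set A := ∑ l ∈ Finset.Ioc 0 m, max 0 (-(1 + β l)) with hA
  have hA0 : 0 ≤ A := Finset.sum_nonneg fun l _ => le_max_left 0 _
  set ε := (β 0/2)/(A+1) with hεdef
  have hε : 0 < ε := by positivity
  have hεA : ε * A ≤ β 0/2 := eps_bound (by linarith) hA0
  refine ⟨(1 + 1/ε) ^ A, by positivity, ?_⟩
  intro t ht
  have heq : Finset.Icc 1 m = Finset.Ioc 0 m := Finset.Icc_add_one_left_eq_Ioc 0 m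
  rw [heq]
  have t1 := tail_upper (β := β) hε 0 m ht
  have hX0 : X 0 t = t := rfl
  rw [hX0] at t1
  refine t1.trans ?_
  apply mul_le_mul_of_nonneg_left _ (by positivity)
  exact Real.rpow_le_rpow_of_exponent_ge ht.1 ht.2.le (by linarith)

lemma glob_lower {β : ℕ → ℝ} {m : ℕ} (hβ : β 0 < 0) :
    ∃ c : ℝ, 0 < c ∧ ∀ t ∈ Set.Ioo (0:ℝ) 1,
      c * t ^ (-(β 0/2)) ≤ ∏ l ∈ Finset.Icc 1 m, X l t ^ (1 + β l) := by
  set B := ∑ l ∈ Finset.Ioc 0 m, max 0 (1 + β l) with hB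
  have hB0 : 0 ≤ B := Finset.sum_nonneg fun l _ => le_max_left 0 _
  set ε := (-(β 0)/2)/(B+1) with hεdef
  have hε : 0 < ε := by
    apply div_pos (by linarith) (by linarith)
  have hεB : ε * B ≤ -(β 0)/2 := eps_bound (by linarith) hB0
  refine ⟨(1 + 1/ε) ^ (-B), by positivity, ?_⟩
  intro t ht
  have heq : Finset.Icc 1 m = Finset.Ioc 0 m := Finset.Icc_add_one_left_eq_Ioc 0 m
  rw [heq]
  have t1 := tail_lower (β := β) hε 0 m ht
  have hX0 : X 0 t = t := rfl
  rw [hX0] at t1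
  refine (mul_le_mul_of_nonneg_left ?_ (by positivity)).trans t1
  exact Real.rpow_le_rpow_of_exponent_ge ht.1 ht.2.le (by linarith)

lemma prod_contOn {D : ℝ} (hD : 1 ≤ D) (k : ℕ) :
    ContinuousOn (fun r => ∏ l ∈ Finset.Icc 1 k, X l (r / D)) (Set.Ioo 0 D) := by
  intro r hr
  apply ContinuousAt.continuousWithinAt
  exact tendsto_finset_prod _ fun l hl =>
    X_comp_continuousAt hD l (Finset.mem_Icc.mp hl).1 hr

lemma Xpow_contOn {D : ℝ} (hD : 1 ≤ D) (k : ℕ) (hk : 1 ≤ k) (γ : ℝ) :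
    ContinuousOn (fun r => X k (r / D) ^ γ) (Set.Ioo 0 D) := by
  intro r hr
  have hD0 : (0:ℝ) < D := lt_of_lt_of_le one_pos hD
  have hu : r / D ∈ Set.Ioo (0:ℝ) 1 := ⟨div_pos hr.1 hD0, (div_lt_one hD0).mpr hr.2⟩
  exact ((X_comp_continuousAt hD k hk hr).rpow_const
    (Or.inl (ne_of_gt (X_mem k _ hu).1))).continuousWithinAt

theorem integral_finiteness_criterion (m : ℕ) (hm : 1 ≤ m) (β : ℕ → ℝ)
    (δ D : ℝ) (hδ : 0 < δ) (hδ1 : δ < 1) (hD : 1 ≤ D) :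
    MeasureTheory.IntegrableOn
        (fun r => r ^ (-1 + β 0) * ∏ j ∈ Finset.Icc 1 m, X j (r / D) ^ (1 + β j))
        (Set.Ioo 0 δ) ↔
      (0 < β 0 ∨ ∃ j, 1 ≤ j ∧ j ≤ m ∧ (∀ l < j, β l = 0) ∧ 0 < β j) := by
  have hD0 : (0:ℝ) < D := lt_of_lt_of_le one_pos hD
  have hδD : δ < D := lt_of_lt_of_le hδ1 hD
  set F : ℝ → ℝ := fun r => r ^ (-1 + β 0) * ∏ j ∈ Finset.Icc 1 m, X j (r / D) ^ (1 + β j)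
    with hFdef
  have hu : ∀ r ∈ Set.Ioo (0:ℝ) δ, r / D ∈ Set.Ioo (0:ℝ) 1 := fun r hr =>
    ⟨div_pos hr.1 hD0, by rw [div_lt_one hD0]; exact hr.2.trans hδD⟩
  have hrD : ∀ r ∈ Set.Ioo (0:ℝ) δ, r ∈ Set.Ioo (0:ℝ) D := fun r hr => ⟨hr.1, hr.2.trans hδD⟩
  have hsub : Set.Ioo (0:ℝ) δ ⊆ Set.Ioo (0:ℝ) D := fun r hr => hrD r hr
  have hFpos : ∀ r ∈ Set.Ioo (0:ℝ) δ, 0 < F r := by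
    intro r hr
    apply mul_pos (Real.rpow_pos_of_pos hr.1 _)
    exact Finset.prod_pos fun l _ => Real.rpow_pos_of_pos (X_mem l _ (hu r hr)).1 _
  have hFm : MeasureTheory.AEStronglyMeasurable F (volume.restrict (Set.Ioo 0 δ)) :=
    ((F_contOn hD β (-1 + β 0) m).mono hsub).aestronglyMeasurable measurableSet_Ioo
  constructor
  · -- integrable → criterion
    intro hint
    by_contra hcon
    push_neg at hcon
    obtain ⟨hβ0, hforall⟩ := hcon
    rcases lt_or_eq_of_le hβ0 with hβ0lt | hβ0eq
    · -- β 0 < 0 : divergence by comparison with r^(-1+β0/2)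
      obtain ⟨c, hc, hcb⟩ := glob_lower (β := β) (m := m) hβ0lt
      set c' := c * D ^ (β 0/2) with hc'def
      have hc' : 0 < c' := mul_pos hc (Real.rpow_pos_of_pos hD0 _)
      have hbound : ∀ x ∈ Set.Ioo (0:ℝ) δ, c' * x ^ (-1 + β 0/2) ≤ F x := by
        intro x hx
        have hu' := hu x hx
        have h1 := hcb _ hu'
        have h2 : (x / D) ^ (-(β 0/2)) = x ^ (-(β 0/2)) * D ^ (β 0/2) := by
          rw [Real.div_rpow hx.1.le hD0.le, div_eq_mul_inv, ← Real.rpow_neg hD0.le, neg_neg]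
        have h3 : c * (x / D) ^ (-(β 0/2)) = c' * x ^ (-(β 0/2)) := by
          rw [h2, hc'def]; ring
        have h4 : x ^ (-1 + β 0) * (c' * x ^ (-(β 0/2))) = c' * x ^ (-1 + β 0/2) := by
          rw [mul_comm (x ^ (-1 + β 0)) _, mul_assoc, ← Real.rpow_add hx.1]
          congr 2
          ring
        calc c' * x ^ (-1 + β 0/2) = x ^ (-1 + β 0) * (c' * x ^ (-(β 0/2))) := h4.symm
          _ = x ^ (-1 + β 0) * (c * (x / D) ^ (-(β 0/2))) := by rw [h3]
          _ ≤ F x := by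
              apply mul_le_mul_of_nonneg_left (h1) (Real.rpow_nonneg hx.1.le _)
      have hgm : MeasureTheory.AEStronglyMeasurable (fun x : ℝ => c' * x ^ (-1 + β 0/2))
          (volume.restrict (Set.Ioo 0 δ)) := by
        apply ContinuousOn.aestronglyMeasurable _ measurableSet_Ioo
        intro x hx
        exact (ContinuousAt.continuousWithinAt
          ((Real.continuousAt_rpow_const x _ (Or.inl (ne_of_gt hx.1))).const_mul c'))
      have hgint : MeasureTheory.Integrable (fun x : ℝ => c' * x ^ (-1 + β 0/2))
          (volume.restrict (Set.Ioo 0 δ)) := by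
        apply MeasureTheory.Integrable.mono hint hgm
        rw [ae_restrict_iff' measurableSet_Ioo]
        apply Filter.Eventually.of_forall
        intro x hx
        have h0 : 0 ≤ c' * x ^ (-1 + β 0/2) := mul_nonneg hc'.le (Real.rpow_nonneg hx.1.le _)
        rw [Real.norm_of_nonneg h0, Real.norm_of_nonneg (hFpos x hx).le]
        exact hbound x hx
      have hrint : MeasureTheory.IntegrableOn (fun x : ℝ => x ^ (-1 + β 0/2))
          (Set.Ioo (0:ℝ) δ) := by
        have h1 := hgint.const_mul c'⁻¹
        have h2 : (fun x : ℝ => c'⁻¹ * (c' * x ^ (-1 + β 0/2))) =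
            fun x : ℝ => x ^ (-1 + β 0/2) := by
          funext x; field_simp
        rwa [h2] at h1
      have := (intervalIntegral.integrableOn_Ioo_rpow_iff hδ).mp hrint
      linarith
    · -- β 0 = 0
      set S := (Finset.Icc 1 m).filter (fun l => β l ≠ 0) with hSdef
      rcases S.eq_empty_or_nonempty with hS | hS
      · -- critical case : all exponents zero
        have hall : ∀ l, 1 ≤ l → l ≤ m → β l = 0 := by
          intro l h1 h2
          by_contra hne
          have : l ∈ S := Finset.mem_filter.mpr ⟨Finset.mem_Icc.mpr ⟨h1, h2⟩, hne⟩
          rw [hS] at this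
          exact absurd this (Finset.notMem_empty l)
        apply divergence_aux (f := F) (δ := δ) (δ0 := δ/2)
          (h := fun r => Real.log (X m (r/D)))
          (h' := fun r => (∏ l ∈ Finset.Icc 1 m, X l (r/D)) / r)
          ⟨by positivity, by linarith⟩ ?_ ?_ ?_ ?_ hint
        · intro x hx
          exact X_log_hasDerivAt hD m hm (hrD x hx)
        · apply ContinuousOn.mono _ hsub
          exact (prod_contOn hD m).div continuousOn_id fun x hx => ne_of_gt hx.1
        · intro x hx
          have hu' := hu x hx
          have hPpos : 0 < ∏ l ∈ Finset.Icc 1 m, X l (x/D) :=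
            Finset.prod_pos fun l _ => (X_mem l _ hu').1
          have heqF : F x = (∏ l ∈ Finset.Icc 1 m, X l (x/D)) / x := by
            rw [hFdef]
            simp only
            rw [hβ0eq, add_zero, Real.rpow_neg_one]
            rw [Finset.prod_congr rfl (fun l hl => by
              rw [hall l (Finset.mem_Icc.mp hl).1 (Finset.mem_Icc.mp hl).2, add_zero,
                Real.rpow_one])]
            ring
          constructor
          · exact le_of_lt (div_pos hPpos hx.1)
          · rw [heqF]
        · exact (Real.tendsto_log_nhdsGT_zero).comp (X_comp_tendsto hD m)
      · -- first nonzero exponent is negative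
        have hjS := S.min'_mem hS
        set j := S.min' hS with hjdef
        obtain ⟨hjIcc, hjne⟩ := Finset.mem_filter.mp hjS
        obtain ⟨hj1, hjm⟩ := Finset.mem_Icc.mp hjIcc
        have hzero : ∀ l < j, β l = 0 := by
          intro l hl
          rcases Nat.eq_zero_or_pos l with rfl | hl1
          · exact hβ0eq
          · by_contra hne
            have hlS : l ∈ S := Finset.mem_filter.mpr
              ⟨Finset.mem_Icc.mpr ⟨hl1, le_of_lt (lt_of_lt_of_le hl hjm)⟩, hne⟩
            exact absurd (S.min'_le l hlS) (by omega)
        have hβjneg : β j < 0 := lt_of_le_of_ne (hforall j hj1 hjm hzero) hjne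
        obtain ⟨i, hij⟩ : ∃ i, j = i + 1 := ⟨j - 1, by omega⟩
        rw [hij] at hβjneg hzero hjm
        obtain ⟨c, hc, hcb⟩ := key_lower (β := β) hjm hzero hβjneg
        set γ := β (i+1)/2 with hγdef
        have hγ : γ < 0 := by rw [hγdef]; linarith
        apply divergence_aux (f := F) (δ := δ) (δ0 := δ/2)
          (h := fun r => (c/γ) * X (i+1) (r/D) ^ γ)
          (h' := fun x => (c/γ) * (γ * ((∏ l ∈ Finset.Icc 1 (i+1), X l (x/D)) *
            X (i+1) (x/D) ^ γ) / x))
          ⟨by positivity, by linarith⟩ ?_ ?_ ?_ ?_ hint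
        · intro x hx
          exact (X_rpow_hasDerivAt hD (i+1) (by omega) γ (hrD x hx)).const_mul (c/γ)
        · apply ContinuousOn.mono _ hsub
          apply continuousOn_const.mul
          apply ContinuousOn.div _ continuousOn_id fun x hx => ne_of_gt hx.1
          apply continuousOn_const.mul
          exact (prod_contOn hD (i+1)).mul (Xpow_contOn hD (i+1) (by omega) γ)
        · intro x hx
          beta_reduce
          have hu' := hu x hx
          have hXmem := X_mem (i+1) _ hu'
          have hPpos : 0 < ∏ l ∈ Finset.Ioc 0 i, X l (x/D) :=
            Finset.prod_pos fun l _ => (X_mem l _ hu').1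
          have hh' : (c/γ) * (γ * ((∏ l ∈ Finset.Icc 1 (i+1), X l (x/D)) *
              X (i+1) (x/D) ^ γ) / x) =
              c * ((∏ l ∈ Finset.Ioc 0 i, X l (x/D)) * X (i+1) (x/D) ^ (1+γ)) / x := by
            rw [P_split i (x/D)]
            have : X (i+1) (x/D) ^ (1+γ) = X (i+1) (x/D) * X (i+1) (x/D) ^ γ := by
              rw [Real.rpow_add hXmem.1, Real.rpow_one]
            rw [this]
            have hγne : γ ≠ 0 := ne_of_lt hγ
            have hxne : x ≠ 0 := ne_of_gt hx.1
            field_simp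
          constructor
          · rw [hh']
            have : 0 < c * ((∏ l ∈ Finset.Ioc 0 i, X l (x/D)) * X (i+1) (x/D) ^ (1+γ)) / x := by
              apply div_pos _ hx.1
              exact mul_pos hc (mul_pos hPpos (Real.rpow_pos_of_pos hXmem.1 _))
            exact this.le
          · rw [hh']
            have h1 := hcb _ hu'
            have heqF : F x = (∏ l ∈ Finset.Icc 1 m, X l (x/D) ^ (1 + β l)) / x := by
              rw [hFdef]
              simp only
              rw [hβ0eq, add_zero, Real.rpow_neg_one]
              ring
            rw [heqF]
            exact div_le_div_of_nonneg_right h1 hx.1.le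
        · rw [tendsto_const_mul_atBot_of_neg (div_neg_of_pos_of_neg hc hγ)]
          have h1 : Tendsto (fun s : ℝ => s ^ γ) (nhdsWithin 0 (Set.Ioi 0)) atTop := by
            have h2 := (tendsto_rpow_atTop (show (0:ℝ) < -γ by linarith)).comp
              tendsto_inv_nhdsGT_zero
            apply h2.congr'
            filter_upwards [self_mem_nhdsWithin] with s hs
            simp only [Function.comp_apply]
            rw [Real.inv_rpow (le_of_lt hs), Real.rpow_neg (le_of_lt hs), inv_inv]
          exact h1.comp (X_comp_tendsto hD (i+1))
  · -- criterion → integrable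
    rintro (hβ0 | ⟨j, hj1, hjm, hzero, hβj⟩)
    · -- β 0 > 0
      obtain ⟨C, hC, hCb⟩ := glob_upper (β := β) (m := m) hβ0
      set K := C * D ^ (β 0/2) with hKdef
      have hKint : MeasureTheory.IntegrableOn (fun r : ℝ => K * r ^ (-1 + β 0/2))
          (Set.Ioo 0 δ) := by
        have h1 := intervalIntegral.intervalIntegrable_rpow' (show (-1:ℝ) < -1 + β 0/2 by linarith)
          (a := 0) (b := δ)
        rw [intervalIntegrable_iff_integrableOn_Ioo_of_le hδ.le] at h1
        exact h1.const_mul K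
      apply MeasureTheory.Integrable.mono' hKint hFm
      rw [ae_restrict_iff' measurableSet_Ioo]
      apply Filter.Eventually.of_forall
      intro x hx
      rw [Real.norm_of_nonneg (hFpos x hx).le]
      have hu' := hu x hx
      have h1 := hCb _ hu'
      have h2 : (x / D) ^ (-(β 0/2)) = x ^ (-(β 0/2)) * D ^ (β 0/2) := by
        rw [Real.div_rpow hx.1.le hD0.le, div_eq_mul_inv, ← Real.rpow_neg hD0.le, neg_neg]
      have h3 : x ^ (-1 + β 0) * x ^ (-(β 0/2)) = x ^ (-1 + β 0/2) := by
        rw [← Real.rpow_add hx.1]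
        congr 1
        ring
      have hx1 : x ≤ 1 := le_of_lt (hx.2.trans hδ1)
      calc F x ≤ x ^ (-1 + β 0) * (C * (x/D) ^ (-(β 0/2))) := by
            apply mul_le_mul_of_nonneg_left h1 (Real.rpow_nonneg hx.1.le _)
        _ = K * (x ^ (-1 + β 0) * x ^ (-(β 0/2))) := by rw [h2, hKdef]; ring
        _ = K * x ^ (-1 + β 0/2) := by rw [h3]
    · -- existence of good j
      obtain ⟨i, hij⟩ : ∃ i, j = i + 1 := ⟨j - 1, by omega⟩
      rw [hij] at hβj hzero hjm
      have hβ00 : β 0 = 0 := hzero 0 (by omega)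
      obtain ⟨C, hC, hCb⟩ := key_upper (β := β) hjm hzero hβj
      set γ := β (i+1)/2 with hγdef
      have hγ : 0 < γ := by rw [hγdef]; linarith
      apply convergence_aux (δ' := D) hδ hδD hFm
        (h := fun r => (C/γ) * X (i+1) (r/D) ^ γ)
        (h' := fun x => (C/γ) * (γ * ((∏ l ∈ Finset.Icc 1 (i+1), X l (x/D)) *
          X (i+1) (x/D) ^ γ) / x))
      · intro x hx
        exact (X_rpow_hasDerivAt hD (i+1) (by omega) γ hx).const_mul (C/γ)
      · have h1 : Tendsto (fun r => X (i+1) (r/D) ^ γ) (nhdsWithin 0 (Set.Ioi 0))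
            (nhds 0) := by
          have h2 := (X_comp_tendsto hD (i+1)).mono_right nhdsWithin_le_nhds
          have h3 : ContinuousAt (fun s : ℝ => s ^ γ) 0 :=
            Real.continuousAt_rpow_const 0 γ (Or.inr hγ.le)
          have h4 := h3.tendsto.comp h2
          rwa [Real.zero_rpow (ne_of_gt hγ)] at h4
        have h5 := h1.const_mul (C/γ)
        rwa [mul_zero] at h5
      · intro x hx
        have hu' := hu x hx
        have hXmem := X_mem (i+1) _ hu'
        have hPpos : 0 < ∏ l ∈ Finset.Ioc 0 i, X l (x/D) :=
          Finset.prod_pos fun l _ => (X_mem l _ hu').1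
        refine ⟨(hFpos x hx).le, ?_⟩
        have hh' : (C/γ) * (γ * ((∏ l ∈ Finset.Icc 1 (i+1), X l (x/D)) *
            X (i+1) (x/D) ^ γ) / x) =
            C * ((∏ l ∈ Finset.Ioc 0 i, X l (x/D)) * X (i+1) (x/D) ^ (1+γ)) / x := by
          rw [P_split i (x/D)]
          have : X (i+1) (x/D) ^ (1+γ) = X (i+1) (x/D) * X (i+1) (x/D) ^ γ := by
            rw [Real.rpow_add hXmem.1, Real.rpow_one]
          rw [this]
          have hγne : γ ≠ 0 := ne_of_gt hγ
          have hxne : x ≠ 0 := ne_of_gt hx.1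
          field_simp
        rw [hh']
        have h1 := hCb _ hu'
        have heqF : F x = (∏ l ∈ Finset.Icc 1 m, X l (x/D) ^ (1 + β l)) / x := by
          rw [hFdef]
          simp only
          rw [hβ00, add_zero, Real.rpow_neg_one]
          ring
        rw [heqF]
        exact div_le_div_of_nonneg_right h1 hx.1.le
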